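/- The category Rec has weak exponentials: for all objects A, B ⊆ ℕ, the subset B^A := {e ∈ ℕ : for all a ∈ A, {e}(a) is defined and {e}(a) ∈ B}, together with the evaluation morphism ev : B^A × A → B given by ev(⟨e,a⟩) = {e}(a), satisfies: for every object C of Rec and every morphism f : C × A → B of Rec there exists a (not necessarily unique) morphism f' : C → B^A of Rec such that ev(⟨f'(c), a⟩) = f(⟨c,a⟩) for all c ∈ C and a ∈ A. -/

import Mathlib

open CategoryTheory

namespace RecPaper

/-- Kleene application `{e}(n)`: apply the partial recursive function with Gödel code `e`
to the input `n`. -/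
def kap (e n : ℕ) : Part ℕ :=
  Nat.Partrec.Code.eval (Denumerable.ofNat Nat.Partrec.Code e) n

/-- The type of objects of the category `Rec`: subsets of `ℕ`. -/
def RecCat : Type := Set ℕ

/-- The underlying subset of `ℕ` of an object of `Rec`. -/
def RecCat.carrier (A : RecCat) : Set ℕ := A

/-- View a subset of `ℕ` as an object of `Rec`. -/
def RecCat.ofSet (A : Set ℕ) : RecCat := A

instance : CoeSort RecCat Type := ⟨fun A => {n : ℕ // n ∈ A.carrier}⟩

/-- A function between subsets of `ℕ` is *tracked* if there is a partial recursive
function, defined on the whole domain, whose restriction to the domain is the given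
function. -/
def Tracked {A B : RecCat} (f : A → B) : Prop :=
  ∃ g : ℕ →. ℕ, Nat.Partrec g ∧ ∀ a : A, g a.val = Part.some (f a).val

/-- The category `Rec` of subsets of `ℕ` and restrictions of partial recursive functions. -/
instance : Category RecCat where
  Hom A B := {f : A → B // Tracked f}
  id A := ⟨fun a => a, (fun n => n : ℕ → ℕ), Nat.Partrec.of_primrec Nat.Primrec.id,
    fun _ => rfl⟩
  comp {A B C} f g := ⟨fun a => g.1 (f.1 a), by
    obtain ⟨u, pu, hu⟩ := f.2
    obtain ⟨v, pv, hv⟩ := g.2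
    refine ⟨fun n => u n >>= v, pv.comp pu, fun a => ?_⟩
    show (u a.val).bind v = _
    rw [hu a]
    exact (Part.bind_some _ _).trans (hv (f.1 a))⟩
  id_comp _ := rfl
  comp_id _ := rfl
  assoc _ _ _ := rfl

/-- The underlying function of a morphism of `Rec`. -/
def hfun {A B : RecCat} (f : A ⟶ B) : A → B := f.1

/-- The value of a morphism of `Rec` on an element, as a natural number. -/
def happ {A B : RecCat} (f : A ⟶ B) (a : A) : ℕ := (hfun f a).val


/-- The product set `{⟨a,b⟩ : a ∈ A, b ∈ B}`. -/
def prodSet (A B : Set ℕ) : Set ℕ := {n | ∃ a ∈ A, ∃ b ∈ B, n = Nat.pair a b}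

/-- The weak exponential set `B^A`: the set of Gödel codes `e` such that `{e}(a)` is
defined and in `B` for every `a ∈ A`. -/
def expSet (A B : Set ℕ) : Set ℕ := {e | ∀ a ∈ A, ∃ v ∈ B, kap e a = Part.some v}

lemma mem_prodExp {A B : Set ℕ} {x : ℕ} (hx : x ∈ prodSet (expSet A B) A) :
    ∃ v ∈ B, kap (Nat.unpair x).1 (Nat.unpair x).2 = Part.some v := by
  obtain ⟨e, he, a, ha, rfl⟩ := hx
  simpa using he a ha

lemma kap_partrec : Partrec fun n : ℕ => kap (Nat.unpair n).1 (Nat.unpair n).2 :=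
  Nat.Partrec.Code.eval_part.comp
    ((Computable.ofNat _).comp (Computable.fst.comp Computable.unpair))
    (Computable.snd.comp Computable.unpair)

/-- The category `Rec` has weak exponentials: `B^A` together with the evaluation morphism
`ev(⟨e,a⟩) = {e}(a)` weakly classifies morphisms `C × A → B`. -/
theorem rec_weak_exponentials :
    ∀ A B : RecCat,
      ∃ ev : RecCat.ofSet (prodSet (expSet A.carrier B.carrier) A.carrier) ⟶ B,
        (∀ x, kap (Nat.unpair x.val).1 (Nat.unpair x.val).2 = Part.some (happ ev x)) ∧
        ∀ (C : RecCat) (f : RecCat.ofSet (prodSet C.carrier A.carrier) ⟶ B),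
          ∃ f' : C ⟶ RecCat.ofSet (expSet A.carrier B.carrier),
            ∀ (z : RecCat.ofSet (prodSet C.carrier A.carrier)) (c : C)
              (w : RecCat.ofSet (prodSet (expSet A.carrier B.carrier) A.carrier)),
              (Nat.unpair z.val).1 = c.val →
              w.val = Nat.pair (happ f' c) (Nat.unpair z.val).2 →
              happ ev w = happ f z := by
  intro A B
  -- the evaluation morphism
  let evf : RecCat.ofSet (prodSet (expSet A.carrier B.carrier) A.carrier) → B :=
    fun x => ⟨(mem_prodExp x.2).choose, (mem_prodExp x.2).choose_spec.1⟩
  have evspec : ∀ x, kap (Nat.unpair x.val).1 (Nat.unpair x.val).2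
      = Part.some (evf x).val := fun x => (mem_prodExp x.2).choose_spec.2
  have evtr : Tracked evf := by
    refine ⟨fun n => kap (Nat.unpair n).1 (Nat.unpair n).2,
      Partrec.nat_iff.mp kap_partrec, fun x => evspec x⟩
  refine ⟨⟨evf, evtr⟩, fun x => evspec x, ?_⟩
  intro C f
  obtain ⟨g, pg, hg⟩ := f.2
  obtain ⟨cg, hcg⟩ := Nat.Partrec.Code.exists_code.mp pg
  -- key computation: for c ∈ C, a ∈ A, kap (encode (cg.curry c)) a = g (pair c a)
  have key : ∀ (n a : ℕ), kap (Encodable.encode (cg.curry n)) a = g (Nat.pair n a) := by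
    intro n a
    unfold kap
    rw [Denumerable.ofNat_encode, Nat.Partrec.Code.eval_curry, hcg]
  have hexp : ∀ c : C, Encodable.encode (cg.curry c.val) ∈ expSet A.carrier B.carrier := by
    intro c a ha
    have hz : Nat.pair c.val a ∈ prodSet C.carrier A.carrier :=
      ⟨c.val, c.2, a, ha, rfl⟩
    refine ⟨(f.1 ⟨_, hz⟩).val, (f.1 ⟨_, hz⟩).2, ?_⟩
    rw [key, hg ⟨_, hz⟩]
  let f'f : C → RecCat.ofSet (expSet A.carrier B.carrier) :=
    fun c => ⟨Encodable.encode (cg.curry c.val), hexp c⟩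
  have f'tr : Tracked f'f := by
    refine ⟨fun n => Part.some (Encodable.encode (cg.curry n)), ?_, fun c => rfl⟩
    have : Computable fun n : ℕ => Encodable.encode (cg.curry n) :=
      Computable.encode.comp
        ((Primrec₂.to_comp Nat.Partrec.Code.primrec₂_curry).comp (Computable.const cg) Computable.id)
    exact Partrec.nat_iff.mp this.partrec
  refine ⟨⟨f'f, f'tr⟩, ?_⟩
  intro z c w h1 h2
  -- z.val = pair c.val a for a ∈ A
  obtain ⟨c', hc', a, ha, hz⟩ := z.2
  have hc'c : c' = c.val := by rw [← h1, hz, Nat.unpair_pair]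
  have ha2 : (Nat.unpair z.val).2 = a := by rw [hz, Nat.unpair_pair]
  have hw : kap (Nat.unpair w.val).1 (Nat.unpair w.val).2 = g z.val := by
    rw [h2, Nat.unpair_pair, ha2]
    have : happ ⟨f'f, f'tr⟩ c = Encodable.encode (cg.curry c.val) := rfl
    rw [this, key, ← hc'c, ← hz]
  have := evspec w
  rw [hw, hg z] at this
  exact (Part.some_inj.mp this).symm

end RecPaper
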